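/- arXiv:1311.1833 — 3 statements merged into one kernel-verified Lean document; each statement's English description precedes it below -/
import Mathlib

section
/- Let ℓ ≥ 1, m ≥ 1 and N₀ ≥ ℓ be integers, and for k = ℓ+1, …, N₀+1 let S_k : ℂ → ℂ be polynomials of degree at most m−1. Then the open set Ω' = {ζ = (ζ₁, …, ζ_{ℓ+1}) ∈ ℂ^{ℓ+1} : |ζ₁|^{2m} − Σ_{k=ℓ+1}^{N₀+1} |S_k(ζ₁)|² + Σ_{i=2}^{ℓ+1} |ζ_i|^{2m} > 0} is connected. -/
lemma aux_joined_abs (r : ℝ) (z : ℂ) (hz : r ≤ ‖z‖) (C : ℝ) (hrC : r ≤ C)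
    (hC0 : 0 ≤ C) : JoinedIn {w : ℂ | r ≤ ‖w‖} z (C : ℂ) := by
  set A : Set ℂ := {w : ℂ | r ≤ ‖w‖} with hA
  have hzA : z ∈ A := hz
  have hCA : (C : ℂ) ∈ A := by
    simpa [hA, Complex.norm_real, abs_of_nonneg hC0] using hrC
  rcases le_or_gt r 0 with hr | hr
  · have hAuniv : A = Set.univ := Set.eq_univ_of_forall fun w => hr.trans (norm_nonneg w)
    rw [hAuniv]
    exact ((convex_univ (𝕜 := ℝ) (E := ℂ)).isPathConnected ⟨0, trivial⟩).joinedIn z trivial _ trivial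
  · set s : ℝ := ‖z‖ with hs
    have hs0 : 0 < s := lt_of_lt_of_le hr hz
    set z' : ℂ := (C / s : ℝ) • z with hz'
    have habsz' : ‖z'‖ = C := by
      rw [hz', norm_smul, Real.norm_eq_abs,
        abs_of_nonneg (by positivity), ← hs]
      field_simp
    have h1 : JoinedIn A z z' := by
      have hseg : segment ℝ z z' ⊆ A := by
        rintro p ⟨a, b, ha, hb, hab, rfl⟩
        show r ≤ ‖a • z + b • z'‖
        rw [hz', smul_smul, ← add_smul, norm_smul, Real.norm_eq_abs,
          ← hs]
        have ht0 : 0 ≤ a + b * (C / s) := by positivity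
        rw [abs_of_nonneg ht0]
        have hexp : (a + b * (C / s)) * s = a * s + b * C := by field_simp
        nlinarith [mul_le_mul_of_nonneg_left hz ha, mul_le_mul_of_nonneg_left hrC hb]
      refine JoinedIn.mono ?_ hseg
      exact ((convex_segment z z').isPathConnected ⟨z, left_mem_segment ℝ z z'⟩).joinedIn
        z (left_mem_segment ℝ z z') z' (right_mem_segment ℝ z z')
    have h2 : JoinedIn A z' (C : ℂ) := by
      have hsphere : Metric.sphere (0 : ℂ) C ⊆ A := by
        intro u hu
        simp only [Metric.mem_sphere, Complex.dist_eq, sub_zero] at hu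
        show r ≤ ‖u‖
        rw [hu]; exact hrC
      refine JoinedIn.mono ?_ hsphere
      have hpc : IsPathConnected (Metric.sphere (0 : ℂ) C) :=
        isPathConnected_sphere (by rw [Complex.rank_real_complex]; norm_num) 0 hC0
      refine hpc.joinedIn z' ?_ _ ?_
      · simp [Metric.mem_sphere, Complex.dist_eq, habsz']
      · simp [Metric.mem_sphere, Complex.dist_eq, Complex.norm_real, abs_of_nonneg hC0]
    exact h1.trans h2

/-- Let `ℓ ≥ 1`, `m ≥ 1`, `N₀ ≥ ℓ` be integers and, for
`k = ℓ+1, …, N₀+1`, let `S k : ℂ → ℂ` be polynomials of degree at most `m-1`.  Then the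
open set
`Ω' = {ζ ∈ ℂ^{ℓ+1} : |ζ 0|^{2m} - ∑_k |S k (ζ 0)|² + ∑_{i=2}^{ℓ+1} |ζ i|^{2m} > 0}`
is connected. -/
theorem stmt3 (ℓ m N₀ : ℕ) (hℓ : 1 ≤ ℓ) (hm : 1 ≤ m) (hN₀ : ℓ ≤ N₀)
    (S : Fin (N₀ + 1 - ℓ) → Polynomial ℂ)
    (hS : ∀ k, (S k).degree ≤ ((m - 1 : ℕ) : WithBot ℕ)) :
    IsConnected {ζ : Fin (ℓ + 1) → ℂ |
      0 < ‖ζ 0‖ ^ (2 * m)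
          - (∑ k : Fin (N₀ + 1 - ℓ), ‖(S k).eval (ζ 0)‖ ^ 2)
          + ∑ i : Fin ℓ, ‖ζ i.succ‖ ^ (2 * m)} := by
  obtain ⟨n, rfl⟩ : ∃ n, ℓ = n + 1 := ⟨ℓ - 1, (Nat.succ_pred_eq_of_pos hℓ).symm⟩
  set g : ℂ → ℝ := fun w => ∑ k : Fin (N₀ + 1 - (n + 1)), ‖(S k).eval w‖ ^ 2
    with hg
  have hgc : Continuous g :=
    continuous_finset_sum _ fun k _ => (continuous_norm.comp (S k).continuous).pow 2
  set Ω : Set (Fin (n + 1 + 1) → ℂ) := {ζ | 0 < ‖ζ 0‖ ^ (2 * m)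
      - (∑ k : Fin (N₀ + 1 - (n + 1)), ‖(S k).eval (ζ 0)‖ ^ 2)
      + ∑ i : Fin (n + 1), ‖ζ i.succ‖ ^ (2 * m)} with hΩ
  show IsConnected Ω
  have hmemΩ : ∀ ζ : Fin (n + 1 + 1) → ℂ, ζ ∈ Ω ↔
      0 < ‖ζ 0‖ ^ (2 * m) - g (ζ 0)
        + ∑ i : Fin (n + 1), ‖ζ i.succ‖ ^ (2 * m) := by
    intro ζ; rfl
  have h01 : (0 : Fin (n + 1 + 1)) ≠ 1 := by simp [Fin.ext_iff]
  set upd : (Fin (n + 1 + 1) → ℂ) → ℂ → (Fin (n + 1 + 1) → ℂ) :=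
    fun ζ z i => if i = 1 then z else ζ i with hupd
  have hupd0 : ∀ ζ z, upd ζ z 0 = ζ 0 := fun ζ z => by simp [hupd, h01]
  have hupd1 : ∀ ζ z, upd ζ z 1 = z := fun ζ z => by simp [hupd]
  have hupdself : ∀ ζ, upd ζ (ζ 1) = ζ := by
    intro ζ; funext i
    by_cases hi : i = 1
    · subst hi; simp [hupd]
    · simp [hupd, hi]
  have hsucc1 : ∀ i : Fin (n + 1), i.succ = 1 ↔ i = 0 := by
    intro i; rw [← Fin.succ_zero_eq_one, Fin.succ_inj]
  have hcontupd : ∀ z : ℂ, Continuous (fun ζ : Fin (n + 1 + 1) → ℂ => upd ζ z) := by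
    intro z
    refine continuous_pi fun i => ?_
    by_cases hi : i = 1
    · simpa [hupd, hi] using (continuous_const : Continuous fun _ : Fin (n + 1 + 1) → ℂ => z)
    · simpa [hupd, hi] using continuous_apply i
  have hm2 : 2 * m ≠ 0 := by omega
  -- monotonicity in the second coordinate
  have mem_upd : ∀ ζ ∈ Ω, ∀ z : ℂ, ‖ζ 1‖ ≤ ‖z‖ → upd ζ z ∈ Ω := by
    intro ζ hζ z hz
    rw [hmemΩ] at hζ ⊢
    rw [hupd0]
    have hsum : (∑ i : Fin (n + 1), ‖ζ i.succ‖ ^ (2 * m))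
        ≤ ∑ i : Fin (n + 1), ‖upd ζ z i.succ‖ ^ (2 * m) := by
      refine Finset.sum_le_sum fun i _ => ?_
      by_cases hi : i = 0
      · subst hi
        rw [Fin.succ_zero_eq_one, hupd1]
        exact pow_le_pow_left₀ (norm_nonneg _) hz _
      · have : i.succ ≠ 1 := fun h => hi ((hsucc1 i).mp h)
        simp [hupd, this]
    linarith
  -- membership for points with large real second coordinate
  have mem_big : ∀ (p : Fin (n + 1 + 1) → ℂ) (C : ℝ), 1 ≤ C → g (p 0) + 1 ≤ C →
      upd p (C : ℂ) ∈ Ω := by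
    intro p C h1C hCb
    rw [hmemΩ, hupd0]
    have hC0 : (0 : ℝ) ≤ C := le_trans zero_le_one h1C
    have hterm : (C : ℝ) ^ (2 * m)
        ≤ ∑ i : Fin (n + 1), ‖upd p (C : ℂ) i.succ‖ ^ (2 * m) := by
      have := Finset.single_le_sum
        (f := fun i : Fin (n + 1) => ‖upd p (C : ℂ) i.succ‖ ^ (2 * m))
        (fun i _ => by positivity) (Finset.mem_univ 0)
      simp only [Fin.succ_zero_eq_one, hupd1, Complex.norm_real, Real.norm_eq_abs, abs_of_nonneg hC0] at this
      exact this
    have hCpow : C ≤ C ^ (2 * m) := le_self_pow₀ h1C hm2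
    have habs : (0 : ℝ) ≤ ‖p 0‖ ^ (2 * m) := by positivity
    linarith
  -- joining a point to its update
  have joined_upd : ∀ ζ ∈ Ω, ∀ C : ℝ, 0 ≤ C → ‖ζ 1‖ ≤ C →
      JoinedIn Ω ζ (upd ζ (C : ℂ)) := by
    intro ζ hζ C hC0 hC1
    have hj := aux_joined_abs (‖ζ 1‖) (ζ 1) le_rfl C hC1 hC0
    have hcont : Continuous (fun z : ℂ => upd ζ z) := by
      refine continuous_pi fun i => ?_
      by_cases hi : i = 1
      · simp only [hupd, hi, ↓reduceIte]; exact continuous_id'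
      · simpa [hupd, hi] using (continuous_const : Continuous fun _ : ℂ => ζ i)
    have hj2 := hj.map hcont
    rw [hupdself] at hj2
    refine hj2.mono ?_
    rintro _ ⟨z, hzA, rfl⟩
    exact mem_upd ζ hζ z hzA
  refine IsPathConnected.isConnected ?_
  rw [isPathConnected_iff]
  constructor
  · -- nonempty
    refine ⟨upd (fun _ => 0) ((max 1 (g 0 + 1) : ℝ) : ℂ), ?_⟩
    exact mem_big (fun _ => 0) _ (le_max_left _ _) (le_max_right _ _)
  · intro x hx y hy
    have hcs : IsCompact (segment ℝ (x 0) (y 0)) := by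
      rw [segment_eq_image ℝ (x 0) (y 0)]
      exact isCompact_Icc.image (by fun_prop)
    obtain ⟨w₀, hw₀, hMw⟩ := hcs.exists_isMaxOn
      ⟨x 0, left_mem_segment ℝ (x 0) (y 0)⟩ hgc.continuousOn
    set C : ℝ := max (max (‖x 1‖) (‖y 1‖)) (max 1 (g w₀ + 1)) with hC
    have h1C : 1 ≤ C := le_trans (le_max_left _ _) (le_max_right _ _)
    have hC0 : 0 ≤ C := le_trans zero_le_one h1C
    have hxC : ‖x 1‖ ≤ C := le_trans (le_max_left _ _) (le_max_left _ _)
    have hyC : ‖y 1‖ ≤ C := le_trans (le_max_right _ _) (le_max_left _ _)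
    have hgC : g w₀ + 1 ≤ C := le_trans (le_max_right _ _) (le_max_right _ _)
    have hsegbound : ∀ p ∈ segment ℝ x y, g (p 0) + 1 ≤ C := by
      rintro p ⟨a, b, ha, hb, hab, rfl⟩
      have hp0 : (a • x + b • y) 0 ∈ segment ℝ (x 0) (y 0) := by
        exact ⟨a, b, ha, hb, hab, by simp⟩
      have := hMw hp0
      simp only [Set.mem_setOf_eq] at this
      linarith
    have J2 : JoinedIn Ω (upd x (C : ℂ)) (upd y (C : ℂ)) := by
      have hj : JoinedIn (segment ℝ x y) x y :=
        ((convex_segment x y).isPathConnected ⟨x, left_mem_segment ℝ x y⟩).joinedIn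
          x (left_mem_segment ℝ x y) y (right_mem_segment ℝ x y)
      have hj2 := hj.map (f := fun ζ => upd ζ (C : ℂ)) (hcontupd (C : ℂ))
      refine hj2.mono ?_
      rintro _ ⟨p, hp, rfl⟩
      exact mem_big p C h1C (hsegbound p hp)
    exact ((joined_upd x hx C hC0 hxC).trans J2).trans (joined_upd y hy C hC0 hyC).symm
end

section
/- Let D ⊆ ℂ^n be a nonempty connected open set, let a ≥ b ≥ 1 be integers, and let f = (f₁, …, f_a) : D → ℂ^a and g = (g₁, …, g_b) : D → ℂ^b be holomorphic maps such that Σ_{i=1}^{a} |f_i(z)|² = Σ_{j=1}^{b} |g_j(z)|² for all z ∈ D. Then there exists a unitary a × a matrix U such that f(z) = U · (g₁(z), …, g_b(z), 0, …, 0)ᵀ for all z ∈ D. -/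
open Metric Filter Topology Asymptotics Finset

local notation "conj'" => starRingEnd ℂ

lemma spread_ball {V : Type*} [NormedAddCommGroup V] [NormedSpace ℂ V]
    {h : V → ℂ} {q : V} {R ρ : ℝ} (hρ : 0 < ρ)
    (hd : DifferentiableOn ℂ h (ball q R))
    (h0 : ∀ x ∈ ball q ρ, h x = 0) :
    ∀ x ∈ ball q R, h x = 0 := by
  intro p hp
  rcases eq_or_ne p q with rfl | hne
  · exact h0 _ (mem_ball_self hρ)
  have hR : 0 < R := pos_of_mem_ball hp
  set v := p - q with hv
  have hvn : 0 < ‖v‖ := by simpa [hv, sub_eq_zero] using hne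
  set φ : ℂ → ℂ := fun ζ => h (q + ζ • v) with hφ
  have hmem : ∀ ζ : ℂ, ‖ζ‖ < R / ‖v‖ → q + ζ • v ∈ ball q R := by
    intro ζ hζ
    have : ‖ζ • v‖ < R := by
      rw [norm_smul]
      calc ‖ζ‖ * ‖v‖ < (R / ‖v‖) * ‖v‖ := by gcongr
        _ = R := div_mul_cancel₀ _ hvn.ne'
    simpa [mem_ball, dist_eq_norm] using this
  have hφd : DifferentiableOn ℂ φ (ball (0:ℂ) (R / ‖v‖)) := by
    apply hd.comp
    · intro ζ hζ
      exact (differentiable_id.smul_const v).differentiableAt.const_add q |>.differentiableWithinAt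
    · intro ζ hζ
      exact hmem ζ (by simpa [mem_ball, dist_eq_norm] using hζ)
  have han : AnalyticOnNhd ℂ φ (ball (0:ℂ) (R / ‖v‖)) := hφd.analyticOnNhd isOpen_ball
  have h0mem : (0:ℂ) ∈ ball (0:ℂ) (R / ‖v‖) := by
    simp [mem_ball, div_pos hR hvn]
  have hfreq : ∃ᶠ ζ in 𝓝[≠] (0:ℂ), φ ζ = 0 := by
    apply Filter.Eventually.frequently
    have hball : ∀ᶠ ζ in 𝓝 (0:ℂ), φ ζ = 0 := by
      have : Metric.ball (0:ℂ) (ρ / ‖v‖) ∈ 𝓝 (0:ℂ) :=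
        ball_mem_nhds _ (div_pos hρ hvn)
      filter_upwards [this] with ζ hζ
      apply h0
      have : ‖ζ • v‖ < ρ := by
        rw [norm_smul]
        calc ‖ζ‖ * ‖v‖ < (ρ / ‖v‖) * ‖v‖ := by
              gcongr; simpa [mem_ball, dist_eq_norm] using hζ
          _ = ρ := div_mul_cancel₀ _ hvn.ne'
      simpa [mem_ball, dist_eq_norm] using this
    exact hball.filter_mono nhdsWithin_le_nhds
  have := han.eqOn_zero_of_preconnected_of_frequently_eq_zero
    (convex_ball (0:ℂ) _).isPreconnected h0mem hfreq
  have h1 : (1:ℂ) ∈ ball (0:ℂ) (R / ‖v‖) := by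
    simp only [mem_ball, dist_zero_right, norm_one]
    rw [lt_div_iff₀ hvn, one_mul]
    simpa [hv, dist_eq_norm] using hp
  have := this h1
  simpa [hφ, hv] using this

lemma spread_connected {V : Type*} [NormedAddCommGroup V] [NormedSpace ℂ V]
    {h : V → ℂ} {Ω : Set V} (hΩo : IsOpen Ω) (hΩc : IsPreconnected Ω)
    (hd : DifferentiableOn ℂ h Ω)
    {z₀ : V} {ε : ℝ} (hε : 0 < ε) (hball : ball z₀ ε ⊆ Ω)
    (h0 : ∀ x ∈ ball z₀ ε, h x = 0) :
    ∀ x ∈ Ω, h x = 0 := by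
  set A : Set V := {p | ∀ᶠ x in 𝓝 p, h x = 0} with hA
  have hAopen : IsOpen A := by
    apply isOpen_iff_mem_nhds.2
    intro p hp
    rcases _root_.eventually_nhds_iff.1 (hp : ∀ᶠ x in 𝓝 p, h x = 0) with ⟨t, ht, hto, hpt⟩
    exact Filter.eventually_of_mem (hto.mem_nhds hpt)
      (fun x hx => eventually_nhds_iff.2 ⟨t, ht, hto, hx⟩)
  have hAne : (Ω ∩ A).Nonempty := by
    refine ⟨z₀, hball (mem_ball_self hε), ?_⟩
    exact Filter.eventually_of_mem (ball_mem_nhds _ hε) h0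
  have hclos : closure A ∩ Ω ⊆ A := by
    intro p ⟨hpc, hpΩ⟩
    rcases Metric.isOpen_iff.1 hΩo p hpΩ with ⟨r, hr, hrΩ⟩
    rcases Metric.mem_closure_iff.1 hpc (r/2) (by linarith) with ⟨q, hqA, hpq⟩
    rcases Metric.eventually_nhds_iff_ball.1 (hqA : ∀ᶠ x in 𝓝 q, h x = 0) with ⟨δ, hδ, hδ0⟩
    have hqball : ball q (r/2) ⊆ Ω := by
      intro x hx
      apply hrΩ
      calc dist x p ≤ dist x q + dist q p := dist_triangle _ _ _
        _ < r/2 + r/2 := by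
            have := mem_ball.1 hx
            rw [dist_comm q p]
            exact add_lt_add this hpq
        _ = r := by ring
    have hz : ∀ x ∈ ball q (r/2), h x = 0 :=
      spread_ball (lt_min hδ (by linarith)) (hd.mono hqball)
        (fun x hx => hδ0 x (ball_subset_ball (min_le_left _ _) hx))
    have hpmem : p ∈ ball q (r/2) := by
      rw [mem_ball]
      exact hpq
    rcases Metric.isOpen_iff.1 isOpen_ball p hpmem with ⟨r', hr', hr'sub⟩
    exact Filter.eventually_of_mem (ball_mem_nhds _ hr')
      (fun x hx => hz x (hr'sub hx))
  intro x hx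
  have : Ω ⊆ A := hΩc.subset_of_closure_inter_subset hAopen hAne
    (by intro y ⟨h1, h2⟩; exact hclos ⟨h1, h2⟩)
  exact ((this hx) : ∀ᶠ x in 𝓝 x, h x = 0).self_of_nhds

lemma real_points_vanish {ι : Type*} [Fintype ι] [DecidableEq ι]
    {H : (ι → ℂ) → ℂ} {c : ι → ℂ} {R : ℝ} (hR : 0 < R)
    (hcreal : ∀ j, (c j).im = 0)
    (hd : DifferentiableOn ℂ H (ball c R))
    (h0 : ∀ z ∈ ball c R, (∀ j, (z j).im = 0) → H z = 0) :
    ∀ z ∈ ball c R, H z = 0 := by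
  suffices hmain : ∀ s : Finset ι, ∀ z ∈ ball c R, (∀ j ∉ s, (z j).im = 0) → H z = 0 by
    intro z hz
    exact hmain Finset.univ z hz (fun j hj => absurd (Finset.mem_univ j) hj)
  intro s
  induction s using Finset.induction_on with
  | empty => intro z hz hreal; exact h0 z hz (fun j => hreal j (Finset.notMem_empty j))
  | @insert a s ha IH =>
    intro z hz hreal
    set φ : ℂ → ℂ := fun ζ => H (Function.update z a ζ) with hφ
    have hupdate : ∀ ζ : ℂ, dist ζ (c a) < R → Function.update z a ζ ∈ ball c R := by
      intro ζ hζ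
      rw [mem_ball, dist_pi_lt_iff hR]
      intro j
      rcases eq_or_ne j a with rfl | hj
      · simpa using hζ
      · rw [Function.update_of_ne hj]
        exact lt_of_le_of_lt (dist_le_pi_dist z c j) (mem_ball.1 hz)
    have haff : ∀ ζ : ℂ, Function.update z a ζ =
        Function.update z a 0 + ζ • (Pi.single a 1 : ι → ℂ) := by
      intro ζ; funext j
      rcases eq_or_ne j a with rfl | hj
      · simp
      · simp [Function.update_of_ne hj, Pi.single_eq_of_ne hj]
    have hφd : DifferentiableOn ℂ φ (ball (c a) R) := by
      apply hd.comp
      · intro ζ hζ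
        apply DifferentiableAt.differentiableWithinAt
        have : DifferentiableAt ℂ (fun ζ : ℂ => Function.update z a 0 + ζ • (Pi.single a 1 : ι → ℂ)) ζ :=
          (differentiable_id.smul_const _).differentiableAt.const_add _
        exact this.congr_of_eventuallyEq (Filter.Eventually.of_forall (fun x => haff x))
      · intro ζ hζ
        exact hupdate ζ (mem_ball.1 hζ)
    have hφ0 : ∀ ζ : ℂ, ζ.im = 0 → dist ζ (c a) < R → φ ζ = 0 := by
      intro ζ him hζ
      apply IH _ (hupdate ζ hζ)
      intro j hj
      rcases eq_or_ne j a with rfl | hja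
      · simpa using him
      · rw [Function.update_of_ne hja]
        exact hreal j (by simp [hja, hj])
    have hfreq : ∃ᶠ ζ in 𝓝[≠] (c a), φ ζ = 0 := by
      rw [Filter.frequently_iff]
      intro U hU
      rcases mem_nhdsWithin.1 hU with ⟨t, hto, hat, hsub⟩
      rcases Metric.isOpen_iff.1 hto _ hat with ⟨δ, hδ, hδsub⟩
      set ζ : ℂ := c a + Complex.ofReal (min δ R / 2) with hζdef
      have hpos : 0 < min δ R / 2 := by positivity
      have hdist : dist ζ (c a) = min δ R / 2 := by
        rw [hζdef]
        simp only [dist_eq_norm, add_sub_cancel_left, Complex.norm_real, Real.norm_eq_abs]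
        rw [abs_of_pos hpos]
      refine ⟨ζ, hsub ⟨hδsub ?_, ?_⟩, ?_⟩
      · rw [mem_ball, hdist]
        have := min_le_left δ R
        linarith
      · simp only [Set.mem_compl_iff, Set.mem_singleton_iff, hζdef]
        intro hcon
        have h2 : Complex.ofReal (min δ R / 2) = 0 := add_eq_left.1 hcon
        rw [Complex.ofReal_eq_zero] at h2
        linarith
      · apply hφ0
        · simp [hζdef, hcreal a]
        · rw [hdist]
          have := min_le_right δ R
          linarith
    have han : AnalyticOnNhd ℂ φ (ball (c a) R) := hφd.analyticOnNhd isOpen_ball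
    have hca : c a ∈ ball (c a) R := mem_ball_self hR
    have hzero := han.eqOn_zero_of_preconnected_of_frequently_eq_zero
      (convex_ball (c a) R).isPreconnected hca hfreq
    have hmem : z a ∈ ball (c a) R :=
      mem_ball.1 (mem_ball.2 (lt_of_le_of_lt (dist_le_pi_dist z c a) (mem_ball.1 hz)))
    have := hzero hmem
    simpa [hφ, Function.update_eq_self] using this

lemma conj_comp_diff {ι : Type*} [Fintype ι] {φ : (ι → ℂ) → ℂ} {p : ι → ℂ}
    (hφ : DifferentiableAt ℂ φ (fun j => conj' (p j))) :
    DifferentiableAt ℂ (fun u => conj' (φ (fun j => conj' (u j)))) p := by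
  set c : (ι → ℂ) → (ι → ℂ) := fun u j => conj' (u j) with hc
  have hcnorm : ∀ v : ι → ℂ, ‖c v‖ = ‖v‖ := by
    intro v
    simp only [Pi.norm_def, hc]
    congr 1
    apply Finset.sup_congr rfl
    intro j _
    simp [nnnorm]
  have hcadd : ∀ x y : ι → ℂ, c (x - y) = c x - c y := by
    intro x y; funext j; simp [hc, map_sub]
  have hccont : Continuous c := by
    apply continuous_pi
    intro j
    exact Complex.continuous_conj.comp (continuous_apply j)
  obtain ⟨L, hL⟩ := hφ
  -- the candidate derivative
  set Mlin : (ι → ℂ) →ₗ[ℂ] ℂ :=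
    { toFun := fun v => conj' (L (c v))
      map_add' := by
        intro x y
        show conj' (L (c (x + y))) = conj' (L (c x)) + conj' (L (c y))
        rw [show c (x + y) = c x + c y from funext fun j => map_add _ _ _]
        simp [map_add]
      map_smul' := by
        intro s v
        have h1 : c (s • v) = conj' s • c v := by
          funext j; simp [hc, map_mul]
        show conj' (L (c (s • v))) = s • conj' (L (c v))
        rw [h1, map_smul]
        simp [smul_eq_mul, map_mul] } with hMlin
  have hMcont : Continuous Mlin := LinearMap.continuous_of_finiteDimensional _
  set M : (ι → ℂ) →L[ℂ] ℂ := ⟨Mlin, hMcont⟩ with hM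
  refine (HasFDerivAt.differentiableAt (f' := M) ?_)
  rw [hasFDerivAt_iff_isLittleO]
  have h2 : (fun x => φ (c x) - φ (c p) - L (c x - c p)) =o[𝓝 p] (fun x => c x - c p) := by
    have hctend : Tendsto c (𝓝 p) (𝓝 (c p)) := hccont.continuousAt
    have := (hasFDerivAt_iff_isLittleO.1 hL).comp_tendsto (by simpa [hc] using hctend)
    exact this
  have h3 := h2.norm_norm
  have heq1 : ∀ x, ‖c x - c p‖ = ‖x - p‖ := by
    intro x; rw [← hcadd, hcnorm]
  have heq2 : ∀ x, ‖φ (c x) - φ (c p) - L (c x - c p)‖ =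
      ‖conj' (φ (c x)) - conj' (φ (c p)) - M (x - p)‖ := by
    intro x
    have hM' : M (x - p) = conj' (L (c (x - p))) := rfl
    rw [hM', ← hcadd]
    rw [show conj' (φ (c x)) - conj' (φ (c p)) - conj' (L (c (x - p)))
        = conj' (φ (c x) - φ (c p) - L (c (x - p))) by rw [map_sub, map_sub]]
    exact (Complex.norm_conj _).symm
  have h4 : (fun x => ‖conj' (φ (c x)) - conj' (φ (c p)) - M (x - p)‖) =o[𝓝 p]
      (fun x => ‖x - p‖) := by
    refine h3.congr (fun x => ?_) (fun x => ?_)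
    · exact heq2 x
    · exact heq1 x
  have h5 := (isLittleO_norm_left.1 (isLittleO_norm_right.1 h4))
  exact h5.congr_left (fun x => by simp [hc])

lemma polarization {n a b : ℕ} {D : Set (Fin n → ℂ)} (hD : IsOpen D)
    (hDconn : IsConnected D)
    {f : (Fin n → ℂ) → Fin a → ℂ} {g : (Fin n → ℂ) → Fin b → ℂ}
    (hf : DifferentiableOn ℂ f D) (hg : DifferentiableOn ℂ g D)
    (hsum : ∀ z ∈ D,
      (∑ i : Fin a, ‖f z i‖ ^ 2) = ∑ j : Fin b, ‖g z j‖ ^ 2) :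
    ∀ z ∈ D, ∀ w ∈ D,
      (∑ i : Fin a, f z i * conj' (f w i)) = ∑ j : Fin b, g z j * conj' (g w j) := by
  classical
  set ι := (Fin n ⊕ Fin n)
  set zmap : (ι → ℂ) → (Fin n → ℂ) := fun u j => u (.inl j) + Complex.I * u (.inr j) with hzmap
  set wmap : (ι → ℂ) → (Fin n → ℂ) := fun u j => u (.inl j) - Complex.I * u (.inr j) with hwmap
  set cwmap : (ι → ℂ) → (Fin n → ℂ) := fun u j => conj' (wmap u j) with hcwmap
  set F : (ι → ℂ) → ℂ := fun u =>
    (∑ i : Fin a, f (zmap u) i * conj' (f (fun j => conj' (wmap u j)) i)) -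
      ∑ j : Fin b, g (zmap u) j * conj' (g (fun j' => conj' (wmap u j')) j) with hF
  set Ω : Set (ι → ℂ) := {u | zmap u ∈ D ∧ cwmap u ∈ D} with hΩ
  have hzcont : Continuous zmap := by
    apply continuous_pi
    intro j
    exact ((continuous_apply (Sum.inl j : ι)).add
      (continuous_const.mul (continuous_apply (Sum.inr j : ι))))
  have hwcont : Continuous wmap := by
    apply continuous_pi
    intro j
    exact ((continuous_apply (Sum.inl j : ι)).sub
      (continuous_const.mul (continuous_apply (Sum.inr j : ι))))
  have hcwcont : Continuous cwmap := by
    apply continuous_pi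
    intro j
    exact Complex.continuous_conj.comp ((continuous_apply (Sum.inl j : ι)).sub
      (continuous_const.mul (continuous_apply (Sum.inr j : ι))))
  have hΩopen : IsOpen Ω := by
    have h1 : IsOpen (zmap ⁻¹' D) := hD.preimage hzcont
    have h2 : IsOpen (cwmap ⁻¹' D) := hD.preimage hcwcont
    exact h1.inter h2
  -- differentiability of zmap and wmap
  have hzdiff : Differentiable ℂ zmap := by
    rw [differentiable_pi]
    intro j
    exact ((ContinuousLinearMap.proj (R := ℂ) (φ := fun _ : ι => ℂ)
      (Sum.inl j)).differentiable.add
      (((ContinuousLinearMap.proj (R := ℂ) (φ := fun _ : ι => ℂ)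
      (Sum.inr j)).differentiable).const_mul Complex.I))
  have hwdiff : Differentiable ℂ wmap := by
    rw [differentiable_pi]
    intro j
    exact ((ContinuousLinearMap.proj (R := ℂ) (φ := fun _ : ι => ℂ)
      (Sum.inl j)).differentiable.sub
      (((ContinuousLinearMap.proj (R := ℂ) (φ := fun _ : ι => ℂ)
      (Sum.inr j)).differentiable).const_mul Complex.I))
  -- differentiability of F on Ω
  have hFdiff : DifferentiableOn ℂ F Ω := by
    intro u hu
    apply DifferentiableAt.differentiableWithinAt
    have huz : zmap u ∈ D := hu.1
    have huw : cwmap u ∈ D := hu.2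
    have hterm1 : ∀ i : Fin a, DifferentiableAt ℂ (fun v => f (zmap v) i) u := by
      intro i
      have hfi : DifferentiableAt ℂ (fun z => f z i) (zmap u) :=
        ((differentiableOn_pi.1 hf i).differentiableAt (hD.mem_nhds huz))
      exact hfi.comp u (hzdiff u)
    have hterm2 : ∀ i : Fin a,
        DifferentiableAt ℂ (fun v => conj' (f (fun j => conj' (wmap v j)) i)) u := by
      intro i
      have hfi : DifferentiableAt ℂ (fun z => f z i)
          (fun j => conj' (wmap u j)) :=
        ((differentiableOn_pi.1 hf i).differentiableAt (hD.mem_nhds huw))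
      have : DifferentiableAt ℂ
          (fun v : Fin n → ℂ => conj' ((fun z => f z i) (fun j => conj' (v j)))) (wmap u) :=
        conj_comp_diff (φ := fun z => f z i) hfi
      exact this.comp u (hwdiff u)
    have hterm3 : ∀ j : Fin b, DifferentiableAt ℂ (fun v => g (zmap v) j) u := by
      intro j
      have hgj : DifferentiableAt ℂ (fun z => g z j) (zmap u) :=
        ((differentiableOn_pi.1 hg j).differentiableAt (hD.mem_nhds huz))
      exact hgj.comp u (hzdiff u)
    have hterm4 : ∀ j : Fin b,
        DifferentiableAt ℂ (fun v => conj' (g (fun j' => conj' (wmap v j')) j)) u := by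
      intro j
      have hgj : DifferentiableAt ℂ (fun z => g z j)
          (fun j' => conj' (wmap u j')) :=
        ((differentiableOn_pi.1 hg j).differentiableAt (hD.mem_nhds huw))
      have : DifferentiableAt ℂ
          (fun v : Fin n → ℂ => conj' ((fun z => g z j) (fun j' => conj' (v j')))) (wmap u) :=
        conj_comp_diff (φ := fun z => g z j) hgj
      exact this.comp u (hwdiff u)
    apply DifferentiableAt.sub
    · exact DifferentiableAt.fun_sum (fun i _ => (hterm1 i).mul (hterm2 i))
    · exact DifferentiableAt.fun_sum (fun j _ => (hterm3 j).mul (hterm4 j))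
  -- the embedding e : D × D → Ω
  set e : (Fin n → ℂ) × (Fin n → ℂ) → (ι → ℂ) := fun zw =>
    Sum.elim (fun j => (zw.1 j + conj' (zw.2 j)) / 2)
      (fun j => (zw.1 j - conj' (zw.2 j)) / (2 * Complex.I)) with he
  have hecont : Continuous e := by
    apply continuous_pi
    intro s
    cases s with
    | inl j =>
      exact (((continuous_apply j).comp continuous_fst).add
        (Complex.continuous_conj.comp ((continuous_apply j).comp continuous_snd))).div_const 2
    | inr j =>
      exact (((continuous_apply j).comp continuous_fst).sub
        (Complex.continuous_conj.comp ((continuous_apply j).comp continuous_snd))).div_const _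
  have hze : ∀ z w : Fin n → ℂ, zmap (e (z, w)) = z := by
    intro z w
    funext j
    simp only [hzmap, he, Sum.elim_inl, Sum.elim_inr]
    field_simp
    ring
  have hwe : ∀ z w : Fin n → ℂ, cwmap (e (z, w)) = w := by
    intro z w
    funext j
    simp only [hcwmap, hwmap, he, Sum.elim_inl, Sum.elim_inr]
    have : (z j + conj' (w j)) / 2 - Complex.I * ((z j - conj' (w j)) / (2 * Complex.I))
        = conj' (w j) := by
      field_simp
      ring
    rw [this]
    simp
  have himage : e '' (D ×ˢ D) = Ω := by
    apply Set.Subset.antisymm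
    · rintro u ⟨⟨z, w⟩, ⟨hz, hw⟩, rfl⟩
      refine ⟨?_, ?_⟩
      · rw [hze z w]; exact hz
      · rw [hwe z w]; exact hw
    · intro u hu
      refine ⟨(zmap u, cwmap u), ⟨hu.1, hu.2⟩, ?_⟩
      funext s
      cases s with
      | inl j =>
        simp only [he, Sum.elim_inl, hzmap, hcwmap, hwmap, Complex.conj_conj]
        ring
      | inr j =>
        simp only [he, Sum.elim_inr, hzmap, hcwmap, hwmap, Complex.conj_conj]
        field_simp
        ring
  have hΩconn : IsPreconnected Ω := by
    rw [← himage]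
    exact (IsConnected.image (hDconn.prod hDconn) e hecont.continuousOn).isPreconnected
  -- a real point in Ω
  obtain ⟨z₀, hz₀⟩ := hDconn.nonempty
  set u₀ : ι → ℂ := Sum.elim (fun j => ((z₀ j).re : ℂ)) (fun j => ((z₀ j).im : ℂ)) with hu₀
  have hu₀real : ∀ s : ι, (u₀ s).im = 0 := by
    intro s; cases s <;> simp [hu₀]
  have hzu₀ : zmap u₀ = z₀ := by
    funext j
    simp only [hzmap, hu₀, Sum.elim_inl, Sum.elim_inr]
    rw [mul_comm]
    exact Complex.re_add_im (z₀ j)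
  have hwu₀ : cwmap u₀ = z₀ := by
    funext j
    simp only [hcwmap, hwmap, hu₀, Sum.elim_inl, Sum.elim_inr, map_sub, map_mul,
      Complex.conj_ofReal, Complex.conj_I]
    rw [show ((z₀ j).re : ℂ) - -Complex.I * ((z₀ j).im : ℂ)
        = ((z₀ j).re : ℂ) + ((z₀ j).im : ℂ) * Complex.I by ring]
    exact Complex.re_add_im (z₀ j)
  have hu₀Ω : u₀ ∈ Ω := ⟨by rw [hzu₀]; exact hz₀, by rw [hwu₀]; exact hz₀⟩
  obtain ⟨ε, hε, hballΩ⟩ := Metric.isOpen_iff.1 hΩopen u₀ hu₀Ω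
  -- F vanishes on real points of the ball
  have hFreal : ∀ u ∈ ball u₀ ε, (∀ s : ι, (u s).im = 0) → F u = 0 := by
    intro u hu hureal
    have huΩ : u ∈ Ω := hballΩ hu
    have hkey : (fun j => conj' (wmap u j)) = zmap u := by
      funext j
      simp only [hwmap, hzmap, map_sub, map_mul, Complex.conj_I]
      rw [Complex.conj_eq_iff_im.2 (hureal (Sum.inl j)),
        Complex.conj_eq_iff_im.2 (hureal (Sum.inr j))]
      ring
    have hz : zmap u ∈ D := huΩ.1
    have := hsum (zmap u) hz
    simp only [hF, hkey]
    have habs : ∀ (m : ℕ) (h : (Fin n → ℂ) → Fin m → ℂ) (i : Fin m),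
        h (zmap u) i * conj' (h (zmap u) i) = ((‖h (zmap u) i‖ ^ 2 : ℝ) : ℂ) := by
      intro m h i
      rw [Complex.mul_conj, Complex.sq_norm]
    rw [Finset.sum_congr rfl (fun i _ => habs a f i),
      Finset.sum_congr rfl (fun j _ => habs b g j), ← Complex.ofReal_sum, ← Complex.ofReal_sum]
    rw [sub_eq_zero]
    norm_cast
  have hF0ball : ∀ u ∈ ball u₀ ε, F u = 0 :=
    real_points_vanish hε hu₀real (hFdiff.mono hballΩ) hFreal
  have hF0 : ∀ u ∈ Ω, F u = 0 :=
    spread_connected hΩopen hΩconn hFdiff hε hballΩ hF0ball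
  -- conclusion
  intro z hz w hw
  have huΩ : e (z, w) ∈ Ω := himage ▸ ⟨(z, w), ⟨hz, hw⟩, rfl⟩
  have := hF0 _ huΩ
  simp only [hF] at this
  have hkey2 : (fun j => conj' (wmap (e (z, w)) j)) = w := by
    have := hwe z w
    simp only [hcwmap] at this
    exact this
  rw [hze z w, hkey2] at this
  exact sub_eq_zero.1 this

lemma exists_isometry {a : ℕ} {X : Type*} (fE gE : X → EuclideanSpace ℂ (Fin a))
    (hgram : ∀ x y : X, (inner ℂ (fE x) (fE y) : ℂ) = inner ℂ (gE x) (gE y)) :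
    ∃ U : (EuclideanSpace ℂ (Fin a)) →ₗᵢ[ℂ] EuclideanSpace ℂ (Fin a),
      ∀ x, U (gE x) = fE x := by
  classical
  set L : (X →₀ ℂ) →ₗ[ℂ] EuclideanSpace ℂ (Fin a) := Finsupp.linearCombination ℂ gE with hL
  set M : (X →₀ ℂ) →ₗ[ℂ] EuclideanSpace ℂ (Fin a) := Finsupp.linearCombination ℂ fE with hM
  have hinner : ∀ c : X →₀ ℂ, (inner ℂ (M c) (M c) : ℂ) = inner ℂ (L c) (L c) := by
    intro c
    have key : ∀ v : X → EuclideanSpace ℂ (Fin a), (inner ℂ (Finsupp.linearCombination ℂ v c)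
        (Finsupp.linearCombination ℂ v c) : ℂ)
        = ∑ x ∈ c.support, ∑ y ∈ c.support,
            conj' (c x) * c y * inner ℂ (v x) (v y) := by
      intro v
      rw [Finsupp.linearCombination_apply, Finsupp.sum]
      rw [sum_inner]
      apply Finset.sum_congr rfl
      intro x _
      rw [inner_sum]
      apply Finset.sum_congr rfl
      intro y _
      rw [inner_smul_left, inner_smul_right]
      ring
    rw [hM, hL, key fE, key gE]
    exact Finset.sum_congr rfl fun x _ => Finset.sum_congr rfl fun y _ => by
      rw [hgram x y]
  have hnorm : ∀ c : X →₀ ℂ, ‖M c‖ = ‖L c‖ := by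
    intro c
    rw [norm_eq_sqrt_re_inner (𝕜 := ℂ), norm_eq_sqrt_re_inner (𝕜 := ℂ), hinner c]
  have hker : LinearMap.ker L ≤ LinearMap.ker M := by
    intro c hc
    rw [LinearMap.mem_ker] at hc ⊢
    have := hnorm c
    rw [hc, norm_zero, norm_eq_zero] at this
    exact this
  set T : LinearMap.range L →ₗ[ℂ] EuclideanSpace ℂ (Fin a) :=
    (((LinearMap.ker L).liftQ M hker)).comp
      (LinearMap.quotKerEquivRange L).symm.toLinearMap with hT
  have hTL : ∀ c : X →₀ ℂ, T ⟨L c, LinearMap.mem_range_self L c⟩ = M c := by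
    intro c
    rw [hT]
    simp only [LinearMap.comp_apply, LinearEquiv.coe_toLinearMap]
    have h1 : (LinearMap.quotKerEquivRange L) (Submodule.Quotient.mk c)
        = ⟨L c, LinearMap.mem_range_self L c⟩ :=
      Subtype.ext (LinearMap.quotKerEquivRange_apply_mk L c)
    rw [← h1, LinearEquiv.symm_apply_apply]
    exact Submodule.liftQ_apply _ _ _
  have hTnorm : ∀ v : LinearMap.range L, ‖T v‖ = ‖v‖ := by
    rintro ⟨v, hv⟩
    obtain ⟨c, rfl⟩ := hv
    rw [hTL c]
    rw [hnorm c]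
    rfl
  set Tiso : (LinearMap.range L) →ₗᵢ[ℂ] EuclideanSpace ℂ (Fin a) := ⟨T, hTnorm⟩ with hTiso
  refine ⟨Tiso.extend, ?_⟩
  intro x
  have hmem : gE x ∈ LinearMap.range L := by
    refine ⟨Finsupp.single x 1, ?_⟩
    simp [hL]
  have h2 : gE x = L (Finsupp.single x 1) := by simp [hL]
  have h3 : Tiso.extend (gE x) = Tiso ⟨gE x, hmem⟩ := LinearIsometry.extend_apply Tiso ⟨gE x, hmem⟩
  rw [h3]
  have h4 : (⟨gE x, hmem⟩ : LinearMap.range L)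
      = ⟨L (Finsupp.single x 1), LinearMap.mem_range_self L _⟩ := Subtype.ext h2
  have h5 : Tiso ⟨gE x, hmem⟩ = T ⟨gE x, hmem⟩ := rfl
  rw [h5, h4, hTL]
  simp [hM]

lemma isometry_to_unitary {a : ℕ} (U : (EuclideanSpace ℂ (Fin a)) →ₗᵢ[ℂ] EuclideanSpace ℂ (Fin a)) :
    ∃ Umat : Matrix (Fin a) (Fin a) ℂ, Umat ∈ Matrix.unitaryGroup (Fin a) ℂ ∧
      ∀ v : Fin a → ℂ, Umat.mulVec v = WithLp.ofLp (U (WithLp.toLp 2 v)) := by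
  classical
  set Ulin : (Fin a → ℂ) →ₗ[ℂ] (Fin a → ℂ) :=
    (WithLp.linearEquiv 2 ℂ (Fin a → ℂ)).toLinearMap ∘ₗ U.toLinearMap ∘ₗ
      (WithLp.linearEquiv 2 ℂ (Fin a → ℂ)).symm.toLinearMap with hUlin
  set Umat : Matrix (Fin a) (Fin a) ℂ := LinearMap.toMatrix' Ulin with hUmat
  have hmulVec : ∀ v : Fin a → ℂ, Umat.mulVec v = Ulin v := by
    intro v
    rw [← Matrix.toLin'_apply, hUmat, Matrix.toLin'_toMatrix']
  have hcol : ∀ i k : Fin a, Umat k i = Ulin (Pi.single i 1) k := by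
    intro i k
    rw [hUmat, LinearMap.toMatrix'_apply]
  have hinner_e : ∀ i j : Fin a,
      (inner ℂ (U (EuclideanSpace.single i 1 : EuclideanSpace ℂ (Fin a)))
        (U (EuclideanSpace.single j 1 : EuclideanSpace ℂ (Fin a))) : ℂ) = if i = j then 1 else 0 := by
    intro i j
    rw [LinearIsometry.inner_map_map]
    rw [PiLp.inner_apply]
    simp only [RCLike.inner_apply']
    rcases eq_or_ne i j with rfl | hij
    · rw [Finset.sum_eq_single i]
      · simp
      · intro k _ hk; simp [Pi.single_apply, hk]
      · simp
    · rw [Finset.sum_eq_zero, if_neg hij]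
      intro k _
      rcases eq_or_ne k i with rfl | hki
      · simp [Pi.single_apply, hij.symm]
      · simp [Pi.single_apply, hki]
  refine ⟨Umat, ?_, fun v => hmulVec v⟩
  rw [Matrix.mem_unitaryGroup_iff']
  funext i j
  rw [Matrix.mul_apply]
  have : ∀ k, (star Umat) i k * Umat k j = conj' (Umat k i) * Umat k j := by
    intro k; rw [Matrix.star_apply]; rfl
  rw [Finset.sum_congr rfl (fun k _ => this k)]
  have hsum : ∑ k, conj' (Umat k i) * Umat k j
      = (inner ℂ (U (EuclideanSpace.single i 1 : EuclideanSpace ℂ (Fin a)))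
          (U (EuclideanSpace.single j 1 : EuclideanSpace ℂ (Fin a))) : ℂ) := by
    rw [PiLp.inner_apply]
    simp only [RCLike.inner_apply']
    apply Finset.sum_congr rfl
    intro k _
    rw [hcol i k, hcol j k]
    rfl
  rw [hsum, hinner_e i j, Matrix.one_apply]


/-- Let `D ⊆ ℂ^n` be a nonempty connected open set, let `a ≥ b ≥ 1` be
integers, and let `f : D → ℂ^a`, `g : D → ℂ^b` be holomorphic maps such that
`∑_{i} |f i (z)|² = ∑_{j} |g j (z)|²` on `D`.  Then there is a unitary `a × a` matrix `U`
with `f(z) = U ⬝ (g(z), 0, …, 0)ᵀ` on `D`. -/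
theorem stmt9 (n a b : ℕ) (hb : 1 ≤ b) (hab : b ≤ a)
    (D : Set (Fin n → ℂ)) (hD : IsOpen D) (hDne : D.Nonempty) (hDconn : IsConnected D)
    (f : (Fin n → ℂ) → (Fin a → ℂ)) (g : (Fin n → ℂ) → (Fin b → ℂ))
    (hf : DifferentiableOn ℂ f D) (hg : DifferentiableOn ℂ g D)
    (hsum : ∀ z ∈ D,
      (∑ i : Fin a, ‖f z i‖ ^ 2) = ∑ j : Fin b, ‖g z j‖ ^ 2) :
    ∃ U : Matrix (Fin a) (Fin a) ℂ, U ∈ Matrix.unitaryGroup (Fin a) ℂ ∧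
      ∀ z ∈ D, f z = U.mulVec
        (fun i : Fin a => if h : i.val < b then g z ⟨i.val, h⟩ else 0) := by
  classical
  have hpol := polarization hD hDconn hf hg hsum
  set pad : (Fin b → ℂ) → (Fin a → ℂ) :=
    fun v => (fun i : Fin a => if h : i.val < b then v ⟨i.val, h⟩ else 0) with hpad
  have hpadsum : ∀ u v : Fin b → ℂ,
      (∑ i : Fin a, conj' (pad u i) * pad v i) = ∑ j : Fin b, conj' (u j) * v j := by
    intro u v
    have h1 : ∀ i : Fin a, conj' (pad u i) * pad v i
        = if h : i.val < b then conj' (u ⟨i.val, h⟩) * v ⟨i.val, h⟩ else 0 := by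
      intro i
      by_cases h : i.val < b <;> simp [hpad, h]
    rw [Finset.sum_congr rfl (fun i _ => h1 i)]
    rw [show (univ : Finset (Fin a)) = (univ : Finset (Fin b)).map (Fin.castLEEmb hab) ∪
      (univ \ (univ : Finset (Fin b)).map (Fin.castLEEmb hab)) from by
        rw [Finset.union_sdiff_of_subset (Finset.subset_univ _)]]
    rw [Finset.sum_union (Finset.disjoint_sdiff)]
    have h2 : ∑ i ∈ (univ \ (univ : Finset (Fin b)).map (Fin.castLEEmb hab)),
        (if h : i.val < b then conj' (u ⟨i.val, h⟩) * v ⟨i.val, h⟩ else 0) = 0 := by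
      apply Finset.sum_eq_zero
      intro i hi
      rw [Finset.mem_sdiff, Finset.mem_map] at hi
      rw [dif_neg]
      intro hcon
      exact hi.2 ⟨⟨i.val, hcon⟩, Finset.mem_univ _, by ext; simp⟩
    rw [h2, add_zero, Finset.sum_map]
    apply Finset.sum_congr rfl
    intro j _
    have hj : ((Fin.castLEEmb hab) j).val < b := by simpa using j.isLt
    rw [dif_pos hj]
    congr 1 <;> · congr 1 <;> exact Fin.ext (by simp)
  set fE : D → EuclideanSpace ℂ (Fin a) := fun x => WithLp.toLp 2 (f x.1) with hfE
  set gE : D → EuclideanSpace ℂ (Fin a) := fun x => WithLp.toLp 2 (pad (g x.1)) with hgE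
  have hgram : ∀ x y : D, (inner ℂ (fE x) (fE y) : ℂ) = inner ℂ (gE x) (gE y) := by
    intro x y
    rw [PiLp.inner_apply, PiLp.inner_apply]
    simp only [RCLike.inner_apply']
    have hfsum : (∑ i : Fin a, conj' (fE x i) * fE y i)
        = ∑ i : Fin a, f y.1 i * conj' (f x.1 i) := by
      apply Finset.sum_congr rfl; intro i _; rw [hfE]; exact mul_comm _ _
    have hgsum : (∑ i : Fin a, conj' (gE x i) * gE y i)
        = ∑ j : Fin b, g y.1 j * conj' (g x.1 j) := by
      rw [hgE]
      show (∑ i : Fin a, conj' (pad (g x.1) i) * pad (g y.1) i) = _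
      rw [hpadsum (g x.1) (g y.1)]
      apply Finset.sum_congr rfl; intro j _; ring
    rw [hfsum, hgsum]
    exact hpol y.1 y.2 x.1 x.2
  obtain ⟨U, hU⟩ := exists_isometry fE gE hgram
  obtain ⟨Umat, hUmem, hUvec⟩ := isometry_to_unitary U
  refine ⟨Umat, hUmem, ?_⟩
  intro z hz
  have h3 := hUvec (pad (g z))
  have h4 := hU ⟨z, hz⟩
  rw [show (fun i : Fin a => if h : i.val < b then g z ⟨i.val, h⟩ else 0) = pad (g z) from rfl]
  rw [h3]
  exact (congrArg WithLp.ofLp h4).symm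
end

section
/- Let n ≥ 1, 1 ≤ ℓ ≤ n/2, m ≥ 1 and N₀ ≥ n be integers, and for k = ℓ+1, …, N₀+1 let Q_k : ℂ^{n+1−ℓ} → ℂ be polynomial maps such that the (N₀+1−ℓ) × (n+1−ℓ) Jacobian matrix (∂Q_k/∂z_j) has rank n+1−ℓ at some point of ℂ^{n+1−ℓ}. Then the complement in ℂ^{n+1} of the domain Ω₀ = {z ∈ ℂ^{n+1} : −Σ_{i=1}^{ℓ} |z_i|^{2m} + Σ_{k=ℓ+1}^{N₀+1} |Q_k(z_{ℓ+1}, …, z_{n+1})|² < 1} has nonempty interior; in particular Ω₀ ≠ ℂ^{n+1}. -/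
open Polynomial MvPolynomial

private noncomputable def lineSub (d : ℕ) (z₀ : Fin d → ℂ) (j : Fin d) :
    Fin d → Polynomial ℂ := fun i => if i = j then Polynomial.X else Polynomial.C (z₀ i)

lemma aux_eval (d : ℕ) (z₀ : Fin d → ℂ) (j : Fin d) (Q : MvPolynomial (Fin d) ℂ) (t : ℂ) :
    Polynomial.eval t (MvPolynomial.aeval (lineSub d z₀ j) Q)
      = MvPolynomial.eval (Function.update z₀ j t) Q := by
  induction Q using MvPolynomial.induction_on with
  | C a => simp [MvPolynomial.algebraMap_eq]
  | add p q hp hq => simp [hp, hq]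
  | mul_X p i hp =>
      simp only [map_mul, MvPolynomial.aeval_X, Polynomial.eval_mul, MvPolynomial.eval_mul,
        MvPolynomial.eval_X, hp]
      congr 1
      rcases eq_or_ne i j with h | h
      · subst h; simp [lineSub]
      · simp [lineSub, h, Function.update_of_ne h]

lemma aux_deriv (d : ℕ) (z₀ : Fin d → ℂ) (j : Fin d) (Q : MvPolynomial (Fin d) ℂ) :
    Polynomial.derivative (MvPolynomial.aeval (lineSub d z₀ j) Q)
      = MvPolynomial.aeval (lineSub d z₀ j) (MvPolynomial.pderiv j Q) := by
  induction Q using MvPolynomial.induction_on with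
  | C a => simp [MvPolynomial.algebraMap_eq, MvPolynomial.pderiv_C]
  | add p q hp hq => simp [hp, hq]
  | mul_X p i hp =>
      rw [map_mul, MvPolynomial.aeval_X, Polynomial.derivative_mul, hp,
        MvPolynomial.pderiv_mul, map_add, map_mul, map_mul, MvPolynomial.aeval_X]
      congr 1
      rcases eq_or_ne i j with h | h
      · subst h; simp [lineSub]
      · simp [lineSub, h, MvPolynomial.pderiv_X_of_ne h]

/-- Let `n ≥ 1`, `1 ≤ ℓ ≤ n/2`, `m ≥ 1`, `N₀ ≥ n` be integers and, for
`k = ℓ+1, …, N₀+1`, let `Q k : ℂ^{n+1-ℓ} → ℂ` be polynomial maps whose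
`(N₀+1-ℓ) × (n+1-ℓ)` Jacobian matrix `(∂Q_k/∂z_j)` has rank `n+1-ℓ` at some point.
Then the complement in `ℂ^{n+1}` of
`Ω₀ = {z : -∑_{i=1}^{ℓ} |z i|^{2m} + ∑_k |Q k (z_{ℓ+1}, …, z_{n+1})|² < 1}`
has nonempty interior; in particular `Ω₀ ≠ ℂ^{n+1}`.
(The affine coordinates `z_1, …, z_{n+1}` are indexed by `Fin (n+1)`, so `z_1, …, z_ℓ`
are the coordinates with index `< ℓ` and `z_{ℓ+1}, …, z_{n+1}` those with index `≥ ℓ`.) -/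
theorem stmt11 (n ℓ m N₀ : ℕ) (hn : 1 ≤ n) (hℓ : 1 ≤ ℓ) (hℓn : 2 * ℓ ≤ n)
    (hm : 1 ≤ m) (hN₀ : n ≤ N₀)
    (Q : Fin (N₀ + 1 - ℓ) → MvPolynomial (Fin (n + 1 - ℓ)) ℂ)
    (hrank : ∃ z : Fin (n + 1 - ℓ) → ℂ,
      (Matrix.of fun (k : Fin (N₀ + 1 - ℓ)) (j : Fin (n + 1 - ℓ)) =>
        MvPolynomial.eval z (MvPolynomial.pderiv j (Q k))).rank = n + 1 - ℓ) :
    (interior {z : Fin (n + 1) → ℂ |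
        -(∑ i : Fin (n + 1), if i.val < ℓ then ‖z i‖ ^ (2 * m) else 0)
          + (∑ k : Fin (N₀ + 1 - ℓ), ‖(MvPolynomial.eval
              (fun j : Fin (n + 1 - ℓ) => z ⟨ℓ + j.val, by have := j.isLt; omega⟩)
              (Q k))‖ ^ 2) < 1}ᶜ).Nonempty ∧
      {z : Fin (n + 1) → ℂ |
        -(∑ i : Fin (n + 1), if i.val < ℓ then ‖z i‖ ^ (2 * m) else 0)
          + (∑ k : Fin (N₀ + 1 - ℓ), ‖(MvPolynomial.eval
              (fun j : Fin (n + 1 - ℓ) => z ⟨ℓ + j.val, by have := j.isLt; omega⟩)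
              (Q k))‖ ^ 2) < 1} ≠ Set.univ := by
  classical
  obtain ⟨z₀, hr⟩ := hrank
  -- a nonzero Jacobian entry
  have hne : ∃ k j, MvPolynomial.eval z₀ (MvPolynomial.pderiv j (Q k)) ≠ 0 := by
    by_contra hcon
    push_neg at hcon
    have hz : (Matrix.of fun (k : Fin (N₀ + 1 - ℓ)) (j : Fin (n + 1 - ℓ)) =>
        MvPolynomial.eval z₀ (MvPolynomial.pderiv j (Q k)))
        = (0 : Matrix (Fin (N₀ + 1 - ℓ)) (Fin (n + 1 - ℓ)) ℂ) := by
      ext k j; simpa using hcon k j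
    rw [hz, Matrix.rank_zero] at hr
    omega
  obtain ⟨k₀, j₀, hk⟩ := hne
  set p := MvPolynomial.aeval (lineSub _ z₀ j₀) (Q k₀) with hpdef
  have hderiv : Polynomial.derivative p ≠ 0 := by
    intro h0
    have h1 := aux_eval _ z₀ j₀ (MvPolynomial.pderiv j₀ (Q k₀)) (z₀ j₀)
    rw [← aux_deriv, ← hpdef, h0] at h1
    rw [Function.update_eq_self] at h1
    simp at h1
    exact hk h1.symm
  have hdeg : 0 < p.degree := by
    by_contra hdg
    have ha := Polynomial.degree_le_zero_iff.mp (not_lt.mp hdg)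
    exact hderiv (by rw [ha]; simp)
  obtain ⟨w, hw⟩ := IsAlgClosed.exists_root (p - Polynomial.C 2)
    (by rw [Polynomial.degree_sub_C hdeg]; exact hdeg.ne')
  have hw2 : Polynomial.eval w p = 2 := by
    have := hw
    simp only [Polynomial.IsRoot, Polynomial.eval_sub, Polynomial.eval_C] at this
    exact sub_eq_zero.mp this
  set w' := Function.update z₀ j₀ w with hw'def
  have hQw : MvPolynomial.eval w' (Q k₀) = 2 := by
    rw [← aux_eval]; exact hw2
  -- the point
  set zpt : Fin (n + 1) → ℂ :=
    fun i => if h : i.val < ℓ then 0 else w' ⟨i.val - ℓ, by have := i.isLt; omega⟩ with hzpt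
  have hcoord : (fun j : Fin (n + 1 - ℓ) =>
      zpt ⟨ℓ + j.val, by have := j.isLt; omega⟩) = w' := by
    funext j
    have hnl : ¬ (ℓ + j.val < ℓ) := by omega
    simp only [hzpt, dif_neg hnl]
    congr 1
    ext
    simp
  -- the defining function
  set f : (Fin (n + 1) → ℂ) → ℝ := fun z =>
    -(∑ i : Fin (n + 1), if i.val < ℓ then ‖z i‖ ^ (2 * m) else 0)
      + (∑ k : Fin (N₀ + 1 - ℓ), ‖(MvPolynomial.eval
          (fun j : Fin (n + 1 - ℓ) => z ⟨ℓ + j.val, by have := j.isLt; omega⟩)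
          (Q k))‖ ^ 2) with hfdef
  have hf : Continuous f := by
    apply Continuous.add
    · apply Continuous.neg
      apply continuous_finset_sum
      intro i _
      by_cases h : i.val < ℓ
      · simp only [if_pos h]
        exact (continuous_norm.comp (continuous_apply i)).pow _
      · simp only [if_neg h]; exact continuous_const
    · apply continuous_finset_sum
      intro k _
      exact (continuous_norm.comp ((MvPolynomial.continuous_eval (p := Q k)).comp
        (continuous_pi fun j => continuous_apply _))).pow 2
  have h1 : (∑ i : Fin (n + 1), if i.val < ℓ then ‖zpt i‖ ^ (2 * m) else 0) = 0 := by
    refine Finset.sum_eq_zero fun i _ => ?_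
    by_cases h : i.val < ℓ
    · simp only [if_pos h, hzpt, dif_pos h]
      simp [zero_pow (by omega : 2 * m ≠ 0)]
    · simp [if_neg h]
  have h2 : (4 : ℝ) ≤ ∑ k : Fin (N₀ + 1 - ℓ), ‖(MvPolynomial.eval
      (fun j : Fin (n + 1 - ℓ) => zpt ⟨ℓ + j.val, by have := j.isLt; omega⟩) (Q k))‖ ^ 2 := by
    have hle := Finset.single_le_sum
      (f := fun k : Fin (N₀ + 1 - ℓ) => ‖(MvPolynomial.eval
        (fun j : Fin (n + 1 - ℓ) => zpt ⟨ℓ + j.val, by have := j.isLt; omega⟩) (Q k))‖ ^ 2)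
      (fun k _ => sq_nonneg _) (Finset.mem_univ k₀)
    calc (4 : ℝ) = ‖(MvPolynomial.eval
        (fun j : Fin (n + 1 - ℓ) => zpt ⟨ℓ + j.val, by have := j.isLt; omega⟩) (Q k₀))‖ ^ 2 := by
          rw [hcoord, hQw]; norm_num
      _ ≤ _ := hle
  have hfz : 1 < f zpt := by
    rw [hfdef]
    simp only
    rw [h1]
    linarith
  have hsub : {z : Fin (n + 1) → ℂ | 1 < f z} ⊆ {z : Fin (n + 1) → ℂ |
        -(∑ i : Fin (n + 1), if i.val < ℓ then ‖z i‖ ^ (2 * m) else 0)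
          + (∑ k : Fin (N₀ + 1 - ℓ), ‖(MvPolynomial.eval
              (fun j : Fin (n + 1 - ℓ) => z ⟨ℓ + j.val, by have := j.isLt; omega⟩)
              (Q k))‖ ^ 2) < 1}ᶜ := by
    intro z hz
    simp only [Set.mem_compl_iff, Set.mem_setOf_eq, not_lt]
    have : 1 < f z := hz
    rw [hfdef] at this
    dsimp only at this
    linarith
  have hmem : zpt ∈ interior {z : Fin (n + 1) → ℂ |
        -(∑ i : Fin (n + 1), if i.val < ℓ then ‖z i‖ ^ (2 * m) else 0)
          + (∑ k : Fin (N₀ + 1 - ℓ), ‖(MvPolynomial.eval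
              (fun j : Fin (n + 1 - ℓ) => z ⟨ℓ + j.val, by have := j.isLt; omega⟩)
              (Q k))‖ ^ 2) < 1}ᶜ :=
    interior_maximal hsub (isOpen_lt continuous_const hf) hfz
  refine ⟨⟨zpt, hmem⟩, ?_⟩
  intro hU
  have : zpt ∈ ({z : Fin (n + 1) → ℂ |
        -(∑ i : Fin (n + 1), if i.val < ℓ then ‖z i‖ ^ (2 * m) else 0)
          + (∑ k : Fin (N₀ + 1 - ℓ), ‖(MvPolynomial.eval
              (fun j : Fin (n + 1 - ℓ) => z ⟨ℓ + j.val, by have := j.isLt; omega⟩)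
              (Q k))‖ ^ 2) < 1} : Set _)ᶜ := hsub hfz
  rw [hU] at this
  exact this (Set.mem_univ _)
end
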